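/- Let G = (V, E) be a hypergraph and let D be any recursive linearization of G. Then flowerRel(G) ⊆ P_E(D). -/

import Mathlib

open Finset

/-- A set `I` is a singleton `{v}`. -/
def IsSingleton {V : Type} (I : Finset V) : Prop := ∃ v : V, I = {v}

instance {V : Type} [DecidableEq V] [Fintype V] (I : Finset V) :
    Decidable (IsSingleton I) :=
  inferInstanceAs (Decidable (∃ v : V, I = {v}))

/-- The successors of node `I` in the arc set `A`. -/
def succOf {V : Type} [DecidableEq V] (A : Finset (Finset V × Finset V))
    (I : Finset V) : Finset (Finset V) :=
  (A.filter fun a => a.1 = I).image Prod.snd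

/-- A recursive linearization over the finite ground set `V`: a simple digraph whose
nodes are nonempty subsets of `V` including all singletons, where each arc goes from a
set to a subset, and the successors of every non-singleton node cover it. -/
structure RecLin (V : Type) [Fintype V] [DecidableEq V] where
  nodes : Finset (Finset V)
  arcs : Finset (Finset V × Finset V)
  arcs_fst_mem : ∀ a ∈ arcs, a.1 ∈ nodes
  arcs_snd_mem : ∀ a ∈ arcs, a.2 ∈ nodes
  no_loops : ∀ a ∈ arcs, a.1 ≠ a.2
  singleton_mem : ∀ v : V, ({v} : Finset V) ∈ nodes
  nodes_nonempty : ∀ I ∈ nodes, I.Nonempty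
  arcs_subset : ∀ a ∈ arcs, a.2 ⊆ a.1
  succ_union : ∀ I ∈ nodes, ¬ IsSingleton I → (succOf arcs I).biUnion id = I

/-- The relaxation `P(D)` of a recursive linearization, as a subset of `ℝ^{Finset V}`
constraining only the coordinates indexed by nodes of `D`. -/
def relax {V : Type} [Fintype V] [DecidableEq V] (D : RecLin V) :
    Set (Finset V → ℝ) :=
  { z | (∀ I ∈ D.nodes, 0 ≤ z I ∧ z I ≤ 1)
      ∧ (∀ a ∈ D.arcs, z a.1 ≤ z a.2)
      ∧ (∀ I ∈ D.nodes, ¬ IsSingleton I →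
          z I + ∑ J ∈ succOf D.arcs I, (1 - z J) ≥ 1) }

/-- The projected relaxation `P_T(D)`: the orthogonal projection of `P(D)` onto the
coordinates indexed by `T ∪ S` (`S` = singletons). -/
def projRelax {V : Type} [Fintype V] [DecidableEq V] (D : RecLin V)
    (T : Finset (Finset V)) : Set (Finset V → ℝ) :=
  { z | ∃ w ∈ relax D, ∀ I : Finset V, (I ∈ T ∨ IsSingleton I) → w I = z I }

/-- `D` is a recursive linearization of the hypergraph `G = (V, E)`. -/
def RecLinOf {V : Type} [Fintype V] [DecidableEq V] (D : RecLin V)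
    (E : Finset (Finset V)) : Prop :=
  E ⊆ D.nodes ∧ ∀ I ∈ D.nodes, (∀ a ∈ D.arcs, a.2 ≠ I) → (I ∈ E ∨ IsSingleton I)

/-- `D` is partitioning: the successors of every node are pairwise disjoint. -/
def Partitioning {V : Type} [Fintype V] [DecidableEq V] (D : RecLin V) : Prop :=
  ∀ I ∈ D.nodes, ∀ J ∈ succOf D.arcs I, ∀ J' ∈ succOf D.arcs I, J ≠ J' → J ∩ J' = ∅

/-- `D` is binary: every non-singleton node has exactly two successors. -/
def Binary {V : Type} [Fintype V] [DecidableEq V] (D : RecLin V) : Prop :=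
  ∀ I ∈ D.nodes, ¬ IsSingleton I → (succOf D.arcs I).card = 2

/-- A recursive McCormick linearization is partitioning and binary. -/
def McCormick {V : Type} [Fintype V] [DecidableEq V] (D : RecLin V) : Prop :=
  Partitioning D ∧ Binary D

/-- The extended flower relaxation of the hypergraph `G = (V, E)`, as a subset of
`ℝ^{Finset V}` constraining only the coordinates indexed by `E ∪ S`. -/
def flowerRel {V : Type} [Fintype V] [DecidableEq V] (E : Finset (Finset V)) :
    Set (Finset V → ℝ) :=
  { z | (∀ I : Finset V, (I ∈ E ∨ IsSingleton I) → 0 ≤ z I ∧ z I ≤ 1)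
      ∧ (∀ I ∈ E, ∀ v ∈ I, z I ≤ z {v})
      ∧ (∀ I ∈ E, ∀ k : ℕ, ∀ J : Fin k → Finset V,
          (∀ i, J i ∈ E ∨ IsSingleton (J i)) →
          I ⊆ Finset.univ.biUnion J →
          (∀ i, (J i ∩ I).Nonempty) →
          z I + ∑ i, (1 - z (J i)) ≥ 1) }

/-- The multilinear polytope `ML(G)`: the convex hull of the 0/1 points whose
`E`-coordinates are the products of the corresponding singleton coordinates. -/
def ML {V : Type} [Fintype V] [DecidableEq V] (E : Finset (Finset V)) :
    Set (Finset V → ℝ) :=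
  convexHull ℝ { z : Finset V → ℝ |
    (∀ I : Finset V, (I ∈ E ∨ IsSingleton I) → z I = 0 ∨ z I = 1)
    ∧ ∀ I ∈ E, z I = ∏ v ∈ I, z {v} }

section Aux
variable {V : Type} [Fintype V] [DecidableEq V]

def singSet (V : Type) [Fintype V] [DecidableEq V] : Finset (Finset V) :=
  Finset.univ.image fun v => ({v} : Finset V)

lemma mem_singSet_union {A : Finset V} {E : Finset (Finset V)} :
    A ∈ E ∪ singSet V ↔ A ∈ E ∨ IsSingleton A := by
  simp [singSet, IsSingleton, Finset.mem_union, eq_comm]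

def cand (E : Finset (Finset V)) (K : Finset V) : Finset (Finset (Finset V)) :=
  ((E ∪ singSet V).powerset).filter
    (fun C => K ⊆ C.biUnion id ∧ ∀ A ∈ C, (A ∩ K).Nonempty)

def fval (z : Finset V → ℝ) (C : Finset (Finset V)) : ℝ :=
  1 - ∑ A ∈ C, (1 - z A)

noncomputable def hatz (E : Finset (Finset V)) (z : Finset V → ℝ) (K : Finset V) : ℝ :=
  (insert (0:ℝ) ((cand E K).image (fval z))).max' ⟨0, mem_insert_self 0 _⟩

lemma mem_cand {E : Finset (Finset V)} {K : Finset V} {C : Finset (Finset V)} :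
    C ∈ cand E K ↔ (∀ A ∈ C, A ∈ E ∨ IsSingleton A) ∧ K ⊆ C.biUnion id ∧
      ∀ A ∈ C, (A ∩ K).Nonempty := by
  simp only [cand, mem_filter, mem_powerset]
  constructor
  · rintro ⟨h1, h2, h3⟩; exact ⟨fun A hA => mem_singSet_union.mp (h1 hA), h2, h3⟩
  · rintro ⟨h1, h2, h3⟩; exact ⟨fun A hA => mem_singSet_union.mpr (h1 A hA), h2, h3⟩

lemma hatz_nonneg (E : Finset (Finset V)) (z : Finset V → ℝ) (K : Finset V) :
    0 ≤ hatz E z K :=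
  Finset.le_max' _ 0 (mem_insert_self 0 _)

lemma le_hatz {E : Finset (Finset V)} {z : Finset V → ℝ} {K : Finset V}
    {C : Finset (Finset V)} (hC : C ∈ cand E K) : fval z C ≤ hatz E z K :=
  Finset.le_max' _ _ (mem_insert_of_mem (mem_image_of_mem _ hC))

lemma hatz_le {E : Finset (Finset V)} {z : Finset V → ℝ} {K : Finset V} {b : ℝ}
    (hb : 0 ≤ b) (h : ∀ C ∈ cand E K, fval z C ≤ b) : hatz E z K ≤ b := by
  apply Finset.max'_le
  intro y hy
  rcases mem_insert.mp hy with rfl | hy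
  · exact hb
  · obtain ⟨C, hC, rfl⟩ := mem_image.mp hy
    exact h C hC

lemma hatz_attained (E : Finset (Finset V)) (z : Finset V → ℝ) (K : Finset V) :
    hatz E z K = 0 ∨ ∃ C ∈ cand E K, hatz E z K = fval z C := by
  have := Finset.max'_mem _ (⟨0, mem_insert_self (0:ℝ) _⟩ :
    (insert (0:ℝ) ((cand E K).image (fval z))).Nonempty)
  rcases mem_insert.mp this with h | h
  · exact Or.inl h
  · obtain ⟨C, hC, hCe⟩ := mem_image.mp h
    exact Or.inr ⟨C, hC, hCe.symm⟩

lemma hatz_le_one {E : Finset (Finset V)} {z : Finset V → ℝ}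
    (hb : ∀ I : Finset V, (I ∈ E ∨ IsSingleton I) → 0 ≤ z I ∧ z I ≤ 1)
    (K : Finset V) : hatz E z K ≤ 1 := by
  apply hatz_le zero_le_one
  intro C hC
  obtain ⟨h1, _, _⟩ := mem_cand.mp hC
  have : (0:ℝ) ≤ ∑ A ∈ C, (1 - z A) :=
    Finset.sum_nonneg fun A hA => by linarith [(hb A (h1 A hA)).2]
  simp only [fval]; linarith

lemma hatz_mono {E : Finset (Finset V)} {z : Finset V → ℝ}
    (hb : ∀ I : Finset V, (I ∈ E ∨ IsSingleton I) → 0 ≤ z I ∧ z I ≤ 1)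
    {J K : Finset V} (hJK : J ⊆ K) : hatz E z K ≤ hatz E z J := by
  apply hatz_le (hatz_nonneg E z J)
  intro C hC
  obtain ⟨h1, h2, h3⟩ := mem_cand.mp hC
  set C' := C.filter (fun A => (A ∩ J).Nonempty) with hC'
  have hC'mem : C' ∈ cand E J := by
    refine mem_cand.mpr ⟨fun A hA => h1 A (mem_filter.mp hA).1, ?_, fun A hA => (mem_filter.mp hA).2⟩
    intro v hv
    obtain ⟨A, hA, hvA⟩ := mem_biUnion.mp (h2 (hJK hv))
    exact mem_biUnion.mpr ⟨A, mem_filter.mpr ⟨hA, ⟨v, mem_inter.mpr ⟨hvA, hv⟩⟩⟩, hvA⟩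
  have hsum : ∑ A ∈ C', (1 - z A) ≤ ∑ A ∈ C, (1 - z A) := by
    apply Finset.sum_le_sum_of_subset_of_nonneg (filter_subset _ _)
    intro A hA _
    linarith [(hb A (h1 A hA)).2]
  calc fval z C ≤ fval z C' := by simp only [fval]; linarith
    _ ≤ hatz E z J := le_hatz hC'mem

lemma sum_biUnion_le' {ι α : Type*} [DecidableEq α] (s : Finset ι) (t : ι → Finset α)
    (f : α → ℝ) (hf : ∀ j ∈ s, ∀ A ∈ t j, 0 ≤ f A) :
    ∑ A ∈ s.biUnion t, f A ≤ ∑ j ∈ s, ∑ A ∈ t j, f A := by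
  classical
  induction s using Finset.induction with
  | empty => simp
  | @insert a s ha ih =>
    rw [Finset.biUnion_insert, Finset.sum_insert ha]
    have h1 : ∑ A ∈ t a ∪ s.biUnion t, f A ≤ ∑ A ∈ t a, f A + ∑ A ∈ s.biUnion t, f A := by
      have := Finset.sum_union_inter (s₁ := t a) (s₂ := s.biUnion t) (f := f)
      have hnn : (0:ℝ) ≤ ∑ A ∈ t a ∩ s.biUnion t, f A :=
        Finset.sum_nonneg fun A hA => hf a (mem_insert_self a s) A (mem_inter.mp hA).1
      linarith
    have h2 := ih (fun j hj A hA => hf j (mem_insert_of_mem hj) A hA)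
    linarith

lemma hatz_flower {E : Finset (Finset V)} {z : Finset V → ℝ}
    (hb : ∀ I : Finset V, (I ∈ E ∨ IsSingleton I) → 0 ≤ z I ∧ z I ≤ 1)
    {K : Finset V} {T : Finset (Finset V)} (hcov : T.biUnion id = K) :
    hatz E z K + ∑ J ∈ T, (1 - hatz E z J) ≥ 1 := by
  by_cases h0 : ∃ J ∈ T, hatz E z J = 0
  · obtain ⟨J0, hJ0, hzJ0⟩ := h0
    have h1 : (1 : ℝ) - hatz E z J0 ≤ ∑ J ∈ T, (1 - hatz E z J) :=
      Finset.single_le_sum (f := fun J => 1 - hatz E z J)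
        (fun J _ => by show (0:ℝ) ≤ 1 - hatz E z J; linarith [hatz_le_one hb J]) hJ0
    have := hatz_nonneg E z K
    rw [hzJ0] at h1
    linarith
  · push_neg at h0
    have hat : ∀ J ∈ T, ∃ C, C ∈ cand E J ∧ hatz E z J = fval z C := by
      intro J hJ
      rcases hatz_attained E z J with h | ⟨C, hC, hCe⟩
      · exact absurd h (h0 J hJ)
      · exact ⟨C, hC, hCe⟩
    choose g hg1 hg2 using hat
    set C : Finset (Finset V) := T.attach.biUnion (fun j => g j.1 j.2) with hCdef
    have hCmem : C ∈ cand E K := by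
      refine mem_cand.mpr ⟨?_, ?_, ?_⟩
      · intro A hA
        obtain ⟨j, _, hAj⟩ := mem_biUnion.mp hA
        exact (mem_cand.mp (hg1 j.1 j.2)).1 A hAj
      · intro v hv
        rw [← hcov] at hv
        obtain ⟨J, hJ, hvJ⟩ := mem_biUnion.mp hv
        simp only [id] at hvJ
        have := (mem_cand.mp (hg1 J hJ)).2.1 hvJ
        obtain ⟨A, hA, hvA⟩ := mem_biUnion.mp this
        exact mem_biUnion.mpr ⟨A, mem_biUnion.mpr ⟨⟨J, hJ⟩, mem_attach _ _, hA⟩, hvA⟩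
      · intro A hA
        obtain ⟨j, _, hAj⟩ := mem_biUnion.mp hA
        obtain ⟨v, hv⟩ := (mem_cand.mp (hg1 j.1 j.2)).2.2 A hAj
        rcases mem_inter.mp hv with ⟨hv1, hv2⟩
        have hjK : j.1 ⊆ K := by
          rw [← hcov]; exact subset_biUnion_of_mem id j.2
        exact ⟨v, mem_inter.mpr ⟨hv1, hjK hv2⟩⟩
    have hsum : ∑ A ∈ C, (1 - z A) ≤ ∑ J ∈ T, (1 - hatz E z J) := by
      have h1 := sum_biUnion_le' T.attach (fun j => g j.1 j.2) (fun A => 1 - z A)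
        (fun j _ A hA => by
          have hA' : A ∈ g j.1 j.2 := hA
          show (0:ℝ) ≤ 1 - z A
          linarith [(hb A ((mem_cand.mp (hg1 j.1 j.2)).1 A hA')).2])
      have h2 : ∑ j ∈ T.attach, ∑ A ∈ g j.1 j.2, (1 - z A)
          = ∑ J ∈ T, (1 - hatz E z J) := by
        rw [← Finset.sum_attach T (fun J => 1 - hatz E z J)]
        apply Finset.sum_congr rfl
        intro j _
        rw [hg2 j.1 j.2]
        simp [fval]
      rw [← h2]; exact h1
    have := le_hatz (z := z) hCmem
    simp only [fval] at this
    linarith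
end Aux

section Aux2
variable {V : Type} [Fintype V] [DecidableEq V]

lemma flower_apply {E : Finset (Finset V)} {z : Finset V → ℝ}
    (hf : ∀ I ∈ E, ∀ k : ℕ, ∀ J : Fin k → Finset V,
          (∀ i, J i ∈ E ∨ IsSingleton (J i)) →
          I ⊆ Finset.univ.biUnion J →
          (∀ i, (J i ∩ I).Nonempty) →
          z I + ∑ i, (1 - z (J i)) ≥ 1)
    {K : Finset V} (hK : K ∈ E) {C : Finset (Finset V)} (hC : C ∈ cand E K) :
    z K + ∑ A ∈ C, (1 - z A) ≥ 1 := by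
  obtain ⟨h1, h2, h3⟩ := mem_cand.mp hC
  set e := C.equivFin with he
  have h := hf K hK C.card (fun i => (e.symm i : Finset V)) ?_ ?_ ?_
  · have hsum : ∑ i : Fin C.card, (1 - z ((e.symm i : Finset V)))
        = ∑ A ∈ C, (1 - z A) := by
      rw [← Finset.sum_coe_sort C (fun A => 1 - z A)]
      exact Equiv.sum_comp e.symm (fun a : C => 1 - z (a : Finset V))
    rw [hsum] at h
    exact h
  · intro i; exact h1 _ (e.symm i).2
  · intro v hv
    obtain ⟨A, hA, hvA⟩ := mem_biUnion.mp (h2 hv)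
    refine mem_biUnion.mpr ⟨e ⟨A, hA⟩, mem_univ _, ?_⟩
    simpa using hvA
  · intro i; exact h3 _ (e.symm i).2

lemma hatz_eq {E : Finset (Finset V)} {z : Finset V → ℝ}
    (hz : z ∈ flowerRel E) (hE : ∀ I ∈ E, 2 ≤ I.card)
    {K : Finset V} (hK : K ∈ E ∨ IsSingleton K) : hatz E z K = z K := by
  obtain ⟨hb, hm, hf⟩ := hz
  have hKne : K.Nonempty := by
    rcases hK with hK | ⟨v, rfl⟩
    · exact Finset.card_pos.mp (by linarith [hE K hK])
    · exact ⟨v, mem_singleton_self v⟩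
  apply le_antisymm
  · apply hatz_le (hb K hK).1
    intro C hC
    rcases hK with hKE | ⟨v, rfl⟩
    · have := flower_apply hf hKE hC
      simp only [fval]; linarith
    · obtain ⟨h1, h2, h3⟩ := mem_cand.mp hC
      obtain ⟨A, hA, hvA⟩ := mem_biUnion.mp (h2 (mem_singleton_self v))
      have hzA : z A ≤ z {v} := by
        rcases h1 A hA with hAE | ⟨u, rfl⟩
        · exact hm A hAE v hvA
        · have : u = v := (by simpa using hvA : v = u).symm
          rw [this]
      have hsingle : (1 : ℝ) - z A ≤ ∑ B ∈ C, (1 - z B) :=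
        Finset.single_le_sum (f := fun B => 1 - z B)
          (fun B hB => by show (0:ℝ) ≤ 1 - z B; linarith [(hb B (h1 B hB)).2]) hA
      simp only [fval]; linarith
  · have hmem : ({K} : Finset (Finset V)) ∈ cand E K := by
      refine mem_cand.mpr ⟨?_, ?_, ?_⟩
      · intro A hA; rw [mem_singleton.mp hA]; exact hK
      · intro v hv; exact mem_biUnion.mpr ⟨K, mem_singleton_self K, hv⟩
      · intro A hA; rw [mem_singleton.mp hA, inter_self]; exact hKne
    have := le_hatz (z := z) hmem
    simpa [fval] using this
end Aux2


/-- for every recursive linearization `D` of `G`, the extended flower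
relaxation is contained in the projected relaxation `P_E(D)`. -/
theorem flowerRel_subset_projRelax {V : Type} [Fintype V] [DecidableEq V]
    (E : Finset (Finset V)) (hE : ∀ I ∈ E, 2 ≤ I.card)
    (D : RecLin V) (hD : RecLinOf D E) :
    flowerRel E ⊆ projRelax D E := by
  intro z hz
  have hb := hz.1
  refine ⟨hatz E z, ⟨?_, ?_, ?_⟩, ?_⟩
  · intro I _; exact ⟨hatz_nonneg E z I, hatz_le_one hb I⟩
  · intro a ha; exact hatz_mono hb (D.arcs_subset a ha)
  · intro I hI hns
    exact hatz_flower hb (D.succ_union I hI hns)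
  · intro I hI; exact hatz_eq hz hE hI
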